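/- Let n be a finite index type and let S, T be normal n×n complex matrices such that the product ST is also normal. Then the Frobenius (Hilbert–Schmidt) norm satisfies ‖ST‖₂ ≤ ‖TS‖₂. -/
import Mathlib

open scoped Matrix ComplexOrder

/-- The Frobenius (Hilbert–Schmidt) norm of a matrix: `(Σᵢⱼ |Mᵢⱼ|²)^{1/2}`. -/
noncomputable def frobNorm {n : Type*} [Fintype n] (M : Matrix n n ℂ) : ℝ :=
  Real.sqrt (∑ i, ∑ j, ‖M i j‖ ^ 2)

lemma frob_trace {n : Type*} [Fintype n] (M : Matrix n n ℂ) :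
    ((∑ i, ∑ j, ‖M i j‖ ^ 2 : ℝ) : ℂ) = Matrix.trace (Mᴴ * M) := by
  simp only [Matrix.trace, Matrix.diag, Matrix.mul_apply, Matrix.conjTranspose_apply]
  push_cast
  rw [Finset.sum_comm]
  congr 1; ext i; congr 1; ext j
  rw [Complex.star_def, Complex.conj_mul']

theorem frobNorm_mul_le_frobNorm_mul_of_normal
    {n : Type*} [Fintype n] (S T : Matrix n n ℂ)
    (hS : S * Sᴴ = Sᴴ * S) (hT : T * Tᴴ = Tᴴ * T)
    (hST : (S * T) * (S * T)ᴴ = (S * T)ᴴ * (S * T)) :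
    frobNorm (S * T) ≤ frobNorm (T * S) := by
  have key : ((∑ i, ∑ j, ‖(S * T) i j‖ ^ 2 : ℝ) : ℂ)
      = ((∑ i, ∑ j, ‖(T * S) i j‖ ^ 2 : ℝ) : ℂ) := by
    rw [frob_trace, frob_trace]
    rw [Matrix.conjTranspose_mul, Matrix.conjTranspose_mul]
    calc Matrix.trace (Tᴴ * Sᴴ * (S * T))
        = Matrix.trace ((S * T) * (Tᴴ * Sᴴ)) := Matrix.trace_mul_comm _ _
      _ = Matrix.trace (S * (T * Tᴴ) * Sᴴ) := by rw [← mul_assoc, ← mul_assoc, mul_assoc S]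
      _ = Matrix.trace (S * (Tᴴ * T) * Sᴴ) := by rw [hT]
      _ = Matrix.trace (Sᴴ * (S * (Tᴴ * T))) := (Matrix.trace_mul_comm _ _)
      _ = Matrix.trace ((Sᴴ * S) * (Tᴴ * T)) := by rw [mul_assoc]
      _ = Matrix.trace ((S * Sᴴ) * (Tᴴ * T)) := by rw [hS]
      _ = Matrix.trace ((Tᴴ * T) * (S * Sᴴ)) := Matrix.trace_mul_comm _ _
      _ = Matrix.trace (Sᴴ * (Tᴴ * T) * S) := by
            rw [Matrix.trace_mul_comm (Tᴴ * T), mul_assoc S, Matrix.trace_mul_comm S]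
      _ = Matrix.trace (Sᴴ * Tᴴ * (T * S)) := by
            simp only [mul_assoc]
  have keyR : (∑ i, ∑ j, ‖(S * T) i j‖ ^ 2 : ℝ) = ∑ i, ∑ j, ‖(T * S) i j‖ ^ 2 := by
    exact_mod_cast key
  unfold frobNorm
  rw [keyR]
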